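/- Let φ : ℕ → ℝ_{>0} be increasing with φ(n) → ∞, let a : ℕ → ℝ be a sequence with (1/φ(n)) ∑_{k=0}^n |a_k| bounded, and let (k_i) be a strictly increasing sequence of positive integers such that φ(k_{i+1})/φ(k_i) → 1 and (1/φ(k_i)) ∑_{k=k_{i-1}+1}^{k_i} |a_k| → 0. For each n let k_{i_n} = min{k_i : k_i ≥ n}. Then (1/φ(n)) ∑_{k=0}^n a_k − (1/φ(k_{i_n})) ∑_{k=0}^{k_{i_n}} a_k → 0 as n → ∞. -/

import Mathlib

open Filter Finset

/-- subsequence-averaging lemma, Lemma 4.8 variant.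
`ks i` plays the role of `k_i`; the block from `k_{i-1}+1` to `k_i` is `Finset.Ioc (ks i) (ks (i+1))`
normalised by `φ(k_{i+1})`, matching the paper's indexing `(1/φ(k_i)) ∑_{k=k_{i-1}+1}^{k_i}`.
`sInf {i | n ≤ ks i}` picks the smallest member of the sequence that is `≥ n`. -/
theorem avg_sub_subseq_avg_tendsto_zero
    (φ : ℕ → ℝ) (hφpos : ∀ n, 0 < φ n) (hφmono : Monotone φ)
    (hφtop : Tendsto φ atTop atTop)
    (a : ℕ → ℝ)
    (hbd : ∃ K : ℝ, ∀ n, (φ n)⁻¹ * ∑ k ∈ range (n + 1), |a k| ≤ K)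
    (ks : ℕ → ℕ) (hks : StrictMono ks) (hkspos : 0 < ks 0)
    (hratio : Tendsto (fun i => φ (ks (i + 1)) / φ (ks i)) atTop (nhds 1))
    (hblock : Tendsto (fun i =>
        (φ (ks (i + 1)))⁻¹ * ∑ k ∈ Finset.Ioc (ks i) (ks (i + 1)), |a k|)
      atTop (nhds 0)) :
    Tendsto (fun n : ℕ =>
        (φ n)⁻¹ * ∑ k ∈ range (n + 1), a k
      - (φ (ks (sInf {i | n ≤ ks i})))⁻¹ *
          ∑ k ∈ range (ks (sInf {i | n ≤ ks i}) + 1), a k)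
      atTop (nhds 0) := by
  obtain ⟨K, hK⟩ := hbd
  have hK0 : 0 ≤ K := by
    refine le_trans ?_ (hK 0)
    have := hφpos 0
    positivity
  set I : ℕ → ℕ := fun n => sInf {i | n ≤ ks i} with hIdef
  have hne : ∀ n, {i | n ≤ ks i}.Nonempty := fun n => ⟨n, hks.le_apply⟩
  have hmem : ∀ n, n ≤ ks (I n) := fun n => Nat.sInf_mem (hne n)
  have hlt : ∀ n j, ks j < n → j < I n := by
    intro n j h
    by_contra h'
    push_neg at h'
    exact absurd ((hmem n).trans (hks.monotone h')) (not_le.2 h)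
  -- the dominating function
  set F : ℕ → ℝ := fun j => K * (1 - φ (ks j) / φ (ks (j + 1)))
      + (φ (ks (j + 1)))⁻¹ * ∑ k ∈ Finset.Ioc (ks j) (ks (j + 1)), |a k| with hFdef
  have hF : Tendsto F atTop (nhds 0) := by
    have h1 : Tendsto (fun j => φ (ks j) / φ (ks (j + 1))) atTop (nhds 1) := by
      have := hratio.inv₀ one_ne_zero
      simpa [inv_div] using this
    have : Tendsto F atTop (nhds (K * (1 - 1) + 0)) :=
      ((tendsto_const_nhds.sub h1).const_mul K).add hblock
    simpa using this
  have hItop : Tendsto (fun n => I n - 1) atTop atTop := by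
    rw [tendsto_atTop_atTop]
    intro M
    refine ⟨ks (M + 1) + 1, fun n hn => ?_⟩
    have := hlt n (M + 1) (by omega)
    omega
  refine squeeze_zero_norm' ?_ (hF.comp hItop)
  filter_upwards [eventually_gt_atTop (ks 0)] with n hn
  have hIpos : 0 < I n := hlt n 0 hn
  obtain ⟨j, hj⟩ : ∃ j, I n = j + 1 := ⟨I n - 1, by omega⟩
  show ‖(φ n)⁻¹ * ∑ k ∈ range (n + 1), a k
      - (φ (ks (I n)))⁻¹ * ∑ k ∈ range (ks (I n) + 1), a k‖ ≤ F (I n - 1)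
  rw [hj, Nat.add_sub_cancel]
  have hjn : ks j < n := by
    by_contra h
    push_neg at h
    have h2 : I n ≤ j := Nat.sInf_le h
    omega
  have hnm : n ≤ ks (j + 1) := hj ▸ hmem n
  -- split the sum
  have hIoc : Finset.Ico (n + 1) (ks (j + 1) + 1) = Finset.Ioc n (ks (j + 1)) := by
    ext x; simp
  have hsplit : ∑ k ∈ range (ks (j + 1) + 1), a k
      = ∑ k ∈ range (n + 1), a k + ∑ k ∈ Finset.Ioc n (ks (j + 1)), a k := by
    rw [range_eq_Ico, range_eq_Ico, ← hIoc,
      Finset.sum_Ico_consecutive _ (Nat.zero_le _) (by omega)]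
  set pn := φ n with hpn
  set pm := φ (ks (j + 1)) with hpm
  set pj := φ (ks j) with hpj
  have hpn0 : 0 < pn := hφpos n
  have hpm0 : 0 < pm := hφpos _
  have hpj0 : 0 < pj := hφpos _
  have hpnm : pn ≤ pm := hφmono hnm
  have hpjn : pj ≤ pn := hφmono hjn.le
  set S := ∑ k ∈ range (n + 1), a k with hS
  set B := ∑ k ∈ Finset.Ioc n (ks (j + 1)), a k with hB
  have hSa : |S| ≤ K * pn := by
    have h1 : |S| ≤ ∑ k ∈ range (n + 1), |a k| := Finset.abs_sum_le_sum_abs _ _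
    have h2 := hK n
    rw [inv_mul_le_iff₀ hpn0] at h2
    linarith
  set Bj := ∑ k ∈ Finset.Ioc (ks j) (ks (j + 1)), |a k| with hBj
  have hBa : |B| ≤ Bj := by
    refine (Finset.abs_sum_le_sum_abs _ _).trans ?_
    refine Finset.sum_le_sum_of_subset_of_nonneg ?_ (fun k _ _ => abs_nonneg _)
    exact Finset.Ioc_subset_Ioc_left hjn.le
  have key : pn⁻¹ * S - pm⁻¹ * (S + B) = (pn⁻¹ - pm⁻¹) * S - pm⁻¹ * B := by ring
  have hinv : pm⁻¹ ≤ pn⁻¹ := inv_anti₀ hpn0 hpnm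
  rw [hsplit]
  calc ‖pn⁻¹ * S - pm⁻¹ * (S + B)‖
      = |(pn⁻¹ - pm⁻¹) * S - pm⁻¹ * B| := by rw [key]; rfl
    _ ≤ |(pn⁻¹ - pm⁻¹) * S| + |pm⁻¹ * B| := abs_sub _ _
    _ = (pn⁻¹ - pm⁻¹) * |S| + pm⁻¹ * |B| := by
        rw [abs_mul, abs_mul, abs_of_nonneg (sub_nonneg.2 hinv),
          abs_of_nonneg (le_of_lt (inv_pos.2 hpm0))]
    _ ≤ (pn⁻¹ - pm⁻¹) * (K * pn) + pm⁻¹ * Bj := by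
        have h1 : (pn⁻¹ - pm⁻¹) * |S| ≤ (pn⁻¹ - pm⁻¹) * (K * pn) :=
          mul_le_mul_of_nonneg_left hSa (by linarith)
        have h2 : pm⁻¹ * |B| ≤ pm⁻¹ * Bj :=
          mul_le_mul_of_nonneg_left hBa (by positivity)
        linarith
    _ = K * (1 - pn / pm) + pm⁻¹ * Bj := by
        field_simp
    _ ≤ K * (1 - pj / pm) + pm⁻¹ * Bj := by
        have h : pj / pm ≤ pn / pm := (div_le_div_iff_of_pos_right hpm0).mpr hpjn
        nlinarith
    _ = F j := rfl
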